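/- Assume t_L < 0 < t_R and a_R/t_R > a_L/t_L. Then the system of equations t_L·x⁻ = t_R·x⁺ and (d_L·x⁻ − a_L)/t_L = (d_R·x⁺ − a_R)/t_R has a solution (x⁻, x⁺) with x⁻ < 0 < x⁺ if and only if d_R/t_R² > d_L/t_L². Moreover, when d_R/t_R² > d_L/t_L², the solution with x⁻ < 0 < x⁺ is unique. -/

import Mathlib

theorem stmt_12 (tR tL dR dL aR aL : ℝ) (hL : tL < 0) (hR : 0 < tR)
    (ha : aR / tR > aL / tL) :
    ((∃ xm xp : ℝ, xm < 0 ∧ 0 < xp ∧ tL * xm = tR * xp ∧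
        (dL * xm - aL) / tL = (dR * xp - aR) / tR) ↔
      dR / tR ^ 2 > dL / tL ^ 2) ∧
    (dR / tR ^ 2 > dL / tL ^ 2 →
      ∃! s : ℝ × ℝ, s.1 < 0 ∧ 0 < s.2 ∧ tL * s.1 = tR * s.2 ∧
        (dL * s.1 - aL) / tL = (dR * s.2 - aR) / tR) := by
  have htL : tL ≠ 0 := ne_of_lt hL
  have htR : tR ≠ 0 := ne_of_gt hR
  set K : ℝ := dR * tL ^ 2 - dL * tR ^ 2 with hKdef
  set P : ℝ := -tL * (aL * tR - aR * tL) with hPdef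
  have hP : 0 < P := by
    have h1 : aL * tR - aR * tL = tR * (-tL) * (aR / tR - aL / tL) := by
      field_simp; ring
    have h2 : 0 < aL * tR - aR * tL := by
      rw [h1]
      exact mul_pos (mul_pos hR (neg_pos.mpr hL)) (sub_pos.mpr ha)
    exact mul_pos (neg_pos.mpr hL) h2
  have hKiff : (dR / tR ^ 2 > dL / tL ^ 2) ↔ 0 < K := by
    rw [gt_iff_lt, div_lt_div_iff₀ (pow_pos (neg_pos.mpr hL) 2 |>.trans_eq (by ring))
      (pow_pos hR 2)]
    constructor <;> intro h <;> [skip; skip] <;> simp only [hKdef] at * <;> nlinarith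
  -- characterization: solutions satisfy xp * K = P
  have key : ∀ xm xp : ℝ, tL * xm = tR * xp →
      ((dL * xm - aL) / tL = (dR * xp - aR) / tR ↔ xp * K = P) := by
    intro xm xp h1
    rw [div_eq_div_iff htL htR]
    constructor
    · intro h2
      linear_combination dL * tR * h1 - tL * h2
    · intro h2
      have : tL * ((dL * xm - aL) * tR) = tL * ((dR * xp - aR) * tL) := by
        linear_combination dL * tR * h1 - h2
      exact mul_left_cancel₀ htL this
  constructor
  · constructor
    · rintro ⟨xm, xp, hxm, hxp, h1, h2⟩
      rw [key xm xp h1] at h2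
      rw [hKiff]
      nlinarith
    · intro hgt
      have hK : 0 < K := hKiff.mp hgt
      refine ⟨tR * (P / K) / tL, P / K, ?_, div_pos hP hK, ?_, ?_⟩
      · exact div_neg_of_pos_of_neg (mul_pos hR (div_pos hP hK)) hL
      · field_simp
      · rw [key _ _ (by field_simp)]
        field_simp
  · intro hgt
    have hK : 0 < K := hKiff.mp hgt
    refine ⟨(tR * (P / K) / tL, P / K), ⟨?_, div_pos hP hK, ?_, ?_⟩, ?_⟩
    · exact div_neg_of_pos_of_neg (mul_pos hR (div_pos hP hK)) hL
    · field_simp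
    · rw [key _ _ (by field_simp)]
      field_simp
    · rintro ⟨xm, xp⟩ ⟨hxm, hxp, h1, h2⟩
      simp only at *
      rw [key xm xp h1] at h2
      have hxp' : xp = P / K := by
        rw [eq_div_iff hK.ne']; exact h2
      have hxm' : xm = tR * (P / K) / tL := by
        rw [← hxp', eq_div_iff htL]
        linarith [h1]
      exact Prod.ext hxm' hxp'
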